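/- arXiv:1004.3318 — 2 statements merged into one kernel-verified Lean document; each statement's English description precedes it below -/
import Mathlib

section
/- The polynomial P(x,d) = 24d^4 + 60d^3 - 120d^2 - 432d - 40d^3 x - 119d^2 x - 6dx + 432x + 43d^2 x^2 + 113d x^2 + 54x^2 - 15d x^3 - 30x^3 is nonnegative for all real x in the open interval (0, 3(d+2)/(d+5)) and all integers d >= 3. -/
/-- The polynomial `P(x,d)` is nonnegative for `x ∈ (0, 3(d+2)/(d+5))` and integers `d ≥ 3`. -/
theorem P_nonneg (d : ℤ) (hd : 3 ≤ d) (x : ℝ) (hx0 : 0 < x)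
    (hx1 : x < 3 * ((d:ℝ) + 2) / ((d:ℝ) + 5)) :
    0 ≤ 24*(d:ℝ)^4 + 60*(d:ℝ)^3 - 120*(d:ℝ)^2 - 432*(d:ℝ)
      - 40*(d:ℝ)^3*x - 119*(d:ℝ)^2*x - 6*(d:ℝ)*x + 432*x
      + 43*(d:ℝ)^2*x^2 + 113*(d:ℝ)*x^2 + 54*x^2 - 15*(d:ℝ)*x^3 - 30*x^3 := by
  have hd' : (3:ℝ) ≤ (d:ℝ) := by exact_mod_cast hd
  have hden : (0:ℝ) < (d:ℝ) + 5 := by linarith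
  have h : 0 < 3 * ((d:ℝ) + 2) - x * ((d:ℝ) + 5) := by
    have := (lt_div_iff₀ hden).mp hx1
    linarith
  have hc : (0:ℝ) ≤ (d:ℝ) - 3 := by linarith
  nlinarith [mul_pos h hx0, mul_pos (mul_pos h hx0) hx0, mul_nonneg (mul_pos h hx0).le hc,
    mul_nonneg (mul_nonneg h.le hc) hc, mul_pos h h,
    mul_pos h hden, sq_nonneg ((d:ℝ) - 3), mul_nonneg hc (sq_nonneg x), mul_pos hx0 hx0]
end

section
/- Let tau > 0, omega_1(tau) the free-plate fundamental tone of a bounded domain Omega, mu_1 the first nonzero Neumann eigenvalue of Omega with eigenfunction v (so that ∫_Omega v = 0 and ∫ |Dv|^2 = mu_1 ∫ v^2), and C = ∫_Omega |D^2 v|^2 dx / ∫_Omega v^2 dx. Then mu_1 <= omega_1(tau)/tau <= mu_1 + C/tau, and hence omega_1(tau)/tau converges to mu_1 as tau -> ∞. -/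
open MeasureTheory Filter

/-- Squared Hilbert–Schmidt norm of the Hessian of `u` at `x`. -/
noncomputable def hessSq {d : ℕ} (u : EuclideanSpace ℝ (Fin d) → ℝ)
    (x : EuclideanSpace ℝ (Fin d)) : ℝ :=
  ∑ i, ∑ j, (iteratedFDeriv ℝ 2 u x ![EuclideanSpace.single i 1, EuclideanSpace.single j 1])^2

/-- Squared Euclidean norm of the gradient of `u` at `x`. -/
noncomputable def gradSq {d : ℕ} (u : EuclideanSpace ℝ (Fin d) → ℝ)
    (x : EuclideanSpace ℝ (Fin d)) : ℝ :=
  ∑ i, (fderiv ℝ u x (EuclideanSpace.single i 1))^2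

/-- Plate Rayleigh quotient values over mean-zero trial functions on `Ω`. -/
noncomputable def plateQuotients {d : ℕ} (τ : ℝ) (Ω : Set (EuclideanSpace ℝ (Fin d))) :
    Set ℝ :=
  {q | ∃ u : EuclideanSpace ℝ (Fin d) → ℝ, ContDiff ℝ 2 u ∧
    (∫ x in Ω, u x) = 0 ∧ (0 < ∫ x in Ω, (u x)^2) ∧
    q = (∫ x in Ω, (hessSq u x + τ * gradSq u x)) / (∫ x in Ω, (u x)^2)}

/-- Membrane Rayleigh quotient values over mean-zero trial functions on `Ω`. -/
noncomputable def membraneQuotients {d : ℕ} (Ω : Set (EuclideanSpace ℝ (Fin d))) :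
    Set ℝ :=
  {q | ∃ u : EuclideanSpace ℝ (Fin d) → ℝ, ContDiff ℝ 1 u ∧
    (∫ x in Ω, u x) = 0 ∧ (0 < ∫ x in Ω, (u x)^2) ∧
    q = (∫ x in Ω, gradSq u x) / (∫ x in Ω, (u x)^2)}

lemma hessSq_nonneg {d : ℕ} (u : EuclideanSpace ℝ (Fin d) → ℝ)
    (x : EuclideanSpace ℝ (Fin d)) : 0 ≤ hessSq u x :=
  Finset.sum_nonneg fun _ _ => Finset.sum_nonneg fun _ _ => sq_nonneg _

lemma gradSq_nonneg {d : ℕ} (u : EuclideanSpace ℝ (Fin d) → ℝ)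
    (x : EuclideanSpace ℝ (Fin d)) : 0 ≤ gradSq u x :=
  Finset.sum_nonneg fun _ _ => sq_nonneg _

lemma continuous_hessSq {d : ℕ} {u : EuclideanSpace ℝ (Fin d) → ℝ} (hu : ContDiff ℝ 2 u) :
    Continuous (hessSq u) := by
  unfold hessSq
  exact continuous_finset_sum _ fun i _ => continuous_finset_sum _ fun j _ =>
    (((hu.continuous_iteratedFDeriv le_rfl).eval_const _).pow 2)

lemma continuous_gradSq {d : ℕ} {u : EuclideanSpace ℝ (Fin d) → ℝ} (hu : ContDiff ℝ 1 u) :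
    Continuous (gradSq u) := by
  unfold gradSq
  exact continuous_finset_sum _ fun i _ =>
    (((hu.continuous_fderiv one_ne_zero).clm_apply continuous_const).pow 2)

lemma integrableOn_of_cont {d : ℕ} {Ω : Set (EuclideanSpace ℝ (Fin d))}
    (hΩb : Bornology.IsBounded Ω) {f : EuclideanSpace ℝ (Fin d) → ℝ}
    (hf : Continuous f) : IntegrableOn f Ω := by
  have hc : IsCompact (closure Ω) :=
    Metric.isCompact_of_isClosed_isBounded isClosed_closure hΩb.closure
  exact (hf.continuousOn.integrableOn_compact hc).mono_set subset_closure

/-- With `μ₁` the first nonzero Neumann eigenvalue, attained by an eigenfunction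
`v ∈ H²(Ω)`, and `C = ∫|D²v|²/∫v²`, we have `μ₁ ≤ ω₁(τ)/τ ≤ μ₁ + C/τ` for all `τ > 0`,
and hence `ω₁(τ)/τ → μ₁` as `τ → ∞`. -/
theorem plate_tone_over_tau_to_membrane {d : ℕ}
    (Ω : Set (EuclideanSpace ℝ (Fin d))) (hΩ : IsOpen Ω) (hΩb : Bornology.IsBounded Ω)
    (μ₁ : ℝ) (hμ₁ : μ₁ = sInf (membraneQuotients Ω))
    (v : EuclideanSpace ℝ (Fin d) → ℝ) (hv : ContDiff ℝ 2 v)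
    (hvmean : (∫ x in Ω, v x) = 0) (hvL2 : 0 < ∫ x in Ω, (v x)^2)
    (hveig : (∫ x in Ω, gradSq v x) = μ₁ * ∫ x in Ω, (v x)^2)
    (C : ℝ) (hC : C = (∫ x in Ω, hessSq v x) / (∫ x in Ω, (v x)^2)) :
    (∀ τ : ℝ, 0 < τ →
      μ₁ ≤ sInf (plateQuotients τ Ω) / τ ∧ sInf (plateQuotients τ Ω) / τ ≤ μ₁ + C / τ) ∧
    Tendsto (fun τ : ℝ => sInf (plateQuotients τ Ω) / τ) atTop (nhds μ₁) := by
  have hbddm : BddBelow (membraneQuotients Ω) := by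
    refine ⟨0, ?_⟩
    rintro q ⟨u, hu, -, hL2, rfl⟩
    exact div_nonneg (integral_nonneg fun x => gradSq_nonneg u x) hL2.le
  have hsplit : ∀ (τ : ℝ) (u : EuclideanSpace ℝ (Fin d) → ℝ), ContDiff ℝ 2 u →
      (∫ x in Ω, (hessSq u x + τ * gradSq u x)) =
        (∫ x in Ω, hessSq u x) + τ * (∫ x in Ω, gradSq u x) := by
    intro τ u hu
    rw [integral_add (integrableOn_of_cont hΩb (continuous_hessSq hu))
      ((integrableOn_of_cont hΩb (continuous_gradSq (hu.of_le one_le_two))).const_mul τ),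
      integral_const_mul]
  have key : ∀ τ : ℝ, 0 < τ →
      μ₁ ≤ sInf (plateQuotients τ Ω) / τ ∧ sInf (plateQuotients τ Ω) / τ ≤ μ₁ + C / τ := by
    intro τ hτ
    set S := ∫ x in Ω, (v x)^2 with hS
    have hSpos : 0 < S := hvL2
    -- v is a plate trial function
    have hmem_v : ((∫ x in Ω, hessSq v x) + τ * (∫ x in Ω, gradSq v x)) / S
        ∈ plateQuotients τ Ω := ⟨v, hv, hvmean, hvL2, by rw [hsplit τ v hv]⟩
    have hbddp : BddBelow (plateQuotients τ Ω) := by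
      refine ⟨0, ?_⟩
      rintro q ⟨u, hu, -, hL2, rfl⟩
      refine div_nonneg (integral_nonneg fun x => ?_) hL2.le
      exact add_nonneg (hessSq_nonneg u x) (mul_nonneg hτ.le (gradSq_nonneg u x))
    -- lower bound: every plate quotient is ≥ τ * μ₁
    have hlow : τ * μ₁ ≤ sInf (plateQuotients τ Ω) := by
      refine le_csInf ⟨_, hmem_v⟩ ?_
      rintro q ⟨u, hu, hmean, hL2, rfl⟩
      rw [hsplit τ u hu]
      have hmemb : (∫ x in Ω, gradSq u x) / (∫ x in Ω, (u x)^2) ∈ membraneQuotients Ω :=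
        ⟨u, hu.of_le one_le_two, hmean, hL2, rfl⟩
      have h1 : μ₁ ≤ (∫ x in Ω, gradSq u x) / (∫ x in Ω, (u x)^2) :=
        hμ₁ ▸ csInf_le hbddm hmemb
      have hH : 0 ≤ ∫ x in Ω, hessSq u x := integral_nonneg fun x => hessSq_nonneg u x
      calc τ * μ₁ ≤ τ * ((∫ x in Ω, gradSq u x) / (∫ x in Ω, (u x)^2)) := by
            exact mul_le_mul_of_nonneg_left h1 hτ.le
        _ = (τ * (∫ x in Ω, gradSq u x)) / (∫ x in Ω, (u x)^2) := by ring
        _ ≤ ((∫ x in Ω, hessSq u x) + τ * (∫ x in Ω, gradSq u x)) / (∫ x in Ω, (u x)^2) := by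
            gcongr
            linarith
    -- upper bound via v
    have hHv : (∫ x in Ω, hessSq v x) = C * S := by
      rw [hC]; field_simp
    have hub : sInf (plateQuotients τ Ω) ≤ C + τ * μ₁ := by
      have := csInf_le hbddp hmem_v
      calc sInf (plateQuotients τ Ω)
          ≤ ((∫ x in Ω, hessSq v x) + τ * (∫ x in Ω, gradSq v x)) / S := this
        _ = (C * S + τ * (μ₁ * S)) / S := by rw [hHv, hveig]
        _ = C + τ * μ₁ := by field_simp
    constructor
    · rw [le_div_iff₀ hτ]; linarith
    · rw [div_le_iff₀ hτ]
      have : (μ₁ + C / τ) * τ = μ₁ * τ + C := by field_simp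
      rw [this]; linarith
  refine ⟨key, ?_⟩
  have h1 : Tendsto (fun τ : ℝ => μ₁ + C / τ) atTop (nhds (μ₁ + 0)) :=
    tendsto_const_nhds.add (tendsto_const_nhds.div_atTop tendsto_id)
  rw [add_zero] at h1
  refine tendsto_of_tendsto_of_tendsto_of_le_of_le' tendsto_const_nhds h1 ?_ ?_
  · filter_upwards [eventually_gt_atTop 0] with τ hτ using (key τ hτ).1
  · filter_upwards [eventually_gt_atTop 0] with τ hτ using (key τ hτ).2
end
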